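/- Let d > 0 and let g : [0, π/2] → ℝ be the generalized collision invariant function g(θ) = −∫₀^θ (∫_β^{π/2} sin(2α) e^{−1/(d cos α)} dα)/(cos²β · e^{1/(d cos β)}) dβ. Then each of the three weighted integrals ∫₀^{π/2} g(θ)·(sin θ/cos²θ)·e^{−1/(d cos θ)} dθ, ∫₀^{π/2} g(θ)·(sin θ/cos θ)·e^{−1/(d cos θ)} dθ, and ∫₀^{π/2} g(θ)·sin θ·e^{−1/(d cos θ)} dθ is finite and strictly negative; in particular the averages ⟨g·sin/cos²⟩_M, ⟨g·sin/cos⟩_M and ⟨g·sin⟩_M appearing in the hydrodynamic coefficients are well defined and nonzero. -/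

import Mathlib

open Real MeasureTheory Set

/-- The generalized collision invariant function `g` of the nematic alignment operator. -/
noncomputable def gci (d θ : ℝ) : ℝ :=
  -∫ β in (0:ℝ)..θ,
      (∫ α in β..(π/2), sin (2*α) * exp (-1 / (d * cos α))) /
        (cos β ^ 2 * exp (1 / (d * cos β)))

namespace GciAux

/-- inner integrand -/
noncomputable def phi (d α : ℝ) : ℝ := sin (2*α) * exp (-1 / (d * cos α))

/-- denominator -/
noncomputable def den (d β : ℝ) : ℝ := cos β ^ 2 * exp (1 / (d * cos β))

/-- inner integral -/
noncomputable def N (d β : ℝ) : ℝ := ∫ α in β..(π/2), phi d α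

/-- integrand of gci -/
noncomputable def h (d β : ℝ) : ℝ := N d β / den d β

lemma gci_eq (d θ : ℝ) : gci d θ = -∫ β in (0:ℝ)..θ, h d β := rfl

variable {d : ℝ} (hd : 0 < d)

lemma measurable_phi : Measurable (phi d) := by
  unfold phi
  exact ((continuous_sin.comp (continuous_const.mul continuous_id)).measurable).mul
    (Real.measurable_exp.comp (measurable_const.div ((measurable_cos.const_mul d))))

lemma measurable_den : Measurable (den d) := by
  unfold den
  exact (measurable_cos.pow measurable_const).mul
    (Real.measurable_exp.comp (measurable_const.div ((measurable_cos.const_mul d))))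

include hd

lemma exp_le_one {θ : ℝ} (hθ : 0 ≤ cos θ) : exp (-1 / (d * cos θ)) ≤ 1 := by
  rw [Real.exp_le_one_iff, neg_div]
  simp only [neg_nonpos]
  positivity

omit hd in
lemma phi_nonneg {α : ℝ} (hα : α ∈ Icc 0 (π/2)) : 0 ≤ phi d α := by
  unfold phi
  have h1 : 0 ≤ sin (2*α) := sin_nonneg_of_nonneg_of_le_pi (by linarith [hα.1]) (by linarith [hα.2])
  positivity

lemma norm_phi_le_one {α : ℝ} (hα : α ∈ Icc 0 (π/2)) : ‖phi d α‖ ≤ 1 := by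
  have hc : 0 ≤ cos α := cos_nonneg_of_mem_Icc ⟨by linarith [hα.1, pi_pos], hα.2⟩
  rw [Real.norm_eq_abs, phi, abs_mul, abs_of_pos (exp_pos _)]
  calc |sin (2*α)| * exp (-1 / (d * cos α)) ≤ 1 * 1 :=
        mul_le_mul (abs_sin_le_one _) (exp_le_one hd hc) (exp_pos _).le one_pos.le
    _ = 1 := by ring

lemma phi_integrableOn : IntegrableOn (phi d) (Icc 0 (π/2)) := by
  refine ⟨(measurable_phi.aestronglyMeasurable).restrict,
    HasFiniteIntegral.restrict_of_bounded (C := 1) measure_Icc_lt_top ?_⟩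
  exact (ae_restrict_iff' measurableSet_Icc).2 (Filter.Eventually.of_forall fun α hα =>
    norm_phi_le_one hd hα)

lemma phi_intervalIntegrable {a b : ℝ} (ha : a ∈ Icc 0 (π/2)) (hb : b ∈ Icc 0 (π/2)) :
    IntervalIntegrable (phi d) volume a b :=
  ((phi_integrableOn hd).mono_set (uIcc_subset_Icc ha hb)).intervalIntegrable

lemma N_pos {β : ℝ} (hβ : β ∈ Ico 0 (π/2)) : 0 < N d β := by
  refine intervalIntegral.intervalIntegral_pos_of_pos_on
    (phi_intervalIntegrable hd ⟨hβ.1, hβ.2.le⟩ (right_mem_Icc.2 (by positivity))) ?_ hβ.2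
  intro α hα
  have h1 : 0 < sin (2*α) :=
    sin_pos_of_pos_of_lt_pi (by nlinarith [hβ.1, hα.1]) (by nlinarith [hα.2])
  unfold phi
  positivity

omit hd in
lemma integral_sin_two_mul {β : ℝ} :
    (∫ α in β..(π/2), sin (2*α)) = cos β ^ 2 := by
  have key : ∀ α ∈ uIcc β (π/2), HasDerivAt (fun x => -(cos x ^ 2)) (sin (2*α)) α := by
    intro α _
    have := ((Real.hasDerivAt_cos α).pow 2).neg
    exact this.congr_deriv (by rw [sin_two_mul]; norm_num <;> ring)
  rw [intervalIntegral.integral_eq_sub_of_hasDerivAt key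
    ((continuous_sin.comp (continuous_const.mul continuous_id)).intervalIntegrable _ _)]
  simp [cos_pi_div_two]

lemma N_le {β : ℝ} (hβ : β ∈ Icc 0 (π/2)) :
    N d β ≤ cos β ^ 2 * exp (-1 / (d * cos β)) := by
  have hint1 : IntervalIntegrable (phi d) volume β (π/2) :=
    phi_intervalIntegrable hd hβ (right_mem_Icc.2 (by positivity))
  have hint2 : IntervalIntegrable (fun α => sin (2*α) * exp (-1 / (d * cos β)))
      volume β (π/2) :=
    ((continuous_sin.comp (continuous_const.mul continuous_id)).mul
      continuous_const).intervalIntegrable _ _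
  have hmono : ∀ α ∈ Icc β (π/2), phi d α ≤ sin (2*α) * exp (-1 / (d * cos β)) := by
    intro α hα
    have hα0 : 0 ≤ α := le_trans hβ.1 hα.1
    rcases eq_or_lt_of_le hα.2 with heq | hlt
    · unfold phi
      rw [heq]
      have : sin (2*(π/2)) = 0 := by rw [show (2:ℝ)*(π/2) = π by ring, Real.sin_pi]
      simp [this]
    · have hcα : 0 < cos α := cos_pos_of_mem_Ioo ⟨by linarith [pi_pos], hlt⟩
      have hcβ : 0 < cos β := cos_pos_of_mem_Ioo ⟨by linarith [pi_pos, hβ.1], by linarith [hα.1]⟩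
      have hccle : cos α ≤ cos β :=
        cos_le_cos_of_nonneg_of_le_pi hβ.1 (by linarith [pi_pos]) hα.1
      have hexp : exp (-1 / (d * cos α)) ≤ exp (-1 / (d * cos β)) := by
        apply Real.exp_le_exp.2
        rw [neg_div, neg_div, neg_le_neg_iff]
        apply one_div_le_one_div_of_le (by positivity)
        exact mul_le_mul_of_nonneg_left hccle hd.le
      have hs : 0 ≤ sin (2*α) :=
        sin_nonneg_of_nonneg_of_le_pi (by linarith) (by linarith [hα.2])
      exact mul_le_mul_of_nonneg_left hexp hs
  calc N d β ≤ ∫ α in β..(π/2), sin (2*α) * exp (-1 / (d * cos β)) :=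
        intervalIntegral.integral_mono_on hβ.2 hint1 hint2 hmono
    _ = (∫ α in β..(π/2), sin (2*α)) * exp (-1 / (d * cos β)) := by
        rw [← intervalIntegral.integral_mul_const]
    _ = cos β ^ 2 * exp (-1 / (d * cos β)) := by rw [integral_sin_two_mul]

omit hd in
lemma den_pos {β : ℝ} (hβ : β ∈ Ico 0 (π/2)) : 0 < den d β := by
  have hcβ : 0 < cos β := cos_pos_of_mem_Ioo ⟨by linarith [pi_pos, hβ.1], hβ.2⟩
  unfold den; positivity

lemma h_pos {β : ℝ} (hβ : β ∈ Ico 0 (π/2)) : 0 < h d β :=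
  div_pos (N_pos hd hβ) (den_pos hβ)

lemma h_mem {β : ℝ} (hβ : β ∈ Icc 0 (π/2)) : h d β ∈ Icc 0 1 := by
  rcases eq_or_lt_of_le hβ.2 with heq | hlt
  · have : den d β = 0 := by
      unfold den; rw [heq, cos_pi_div_two]; ring
    unfold h; rw [this, div_zero]
    exact ⟨le_rfl, zero_le_one⟩
  · have hmem : β ∈ Ico 0 (π/2) := ⟨hβ.1, hlt⟩
    refine ⟨(h_pos hd hmem).le, ?_⟩
    have hcβ : 0 < cos β := cos_pos_of_mem_Ioo ⟨by linarith [pi_pos, hβ.1], hlt⟩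
    have hdd : 0 ≤ 1 / (d * cos β) := by positivity
    have hNden : N d β ≤ den d β := by
      refine le_trans (N_le hd hβ) ?_
      unfold den
      apply mul_le_mul_of_nonneg_left _ (by positivity)
      apply Real.exp_le_exp.2
      rw [neg_div]
      linarith
    exact div_le_one_of_le₀ hNden (den_pos hmem).le

lemma N_continuousOn : ContinuousOn (N d) (Icc 0 (π/2)) := by
  have h1 : IntegrableOn (phi d) (uIcc 0 (π/2)) := by
    rw [uIcc_of_le (by positivity)]
    exact phi_integrableOn hd
  have := intervalIntegral.continuousOn_primitive_interval_left h1
  rwa [uIcc_of_le (by positivity)] at this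

set_option maxHeartbeats 1000000 in
lemma h_aesm : AEStronglyMeasurable (h d) (volume.restrict (Icc 0 (π/2))) := by
  have h1 : AEStronglyMeasurable (N d) (volume.restrict (Icc 0 (π/2))) :=
    (N_continuousOn hd).aestronglyMeasurable measurableSet_Icc
  have h2 : AEStronglyMeasurable (den d) (volume.restrict (Icc 0 (π/2))) :=
    (measurable_den (d := d)).aestronglyMeasurable.restrict
  exact (h1.aemeasurable.div h2.aemeasurable).aestronglyMeasurable

lemma h_integrableOn : IntegrableOn (h d) (Icc 0 (π/2)) := by
  refine ⟨h_aesm hd, HasFiniteIntegral.restrict_of_bounded (C := 1) measure_Icc_lt_top ?_⟩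
  refine (ae_restrict_iff' measurableSet_Icc).2 (Filter.Eventually.of_forall fun β hβ => ?_)
  have := h_mem hd hβ
  rw [Real.norm_eq_abs, abs_of_nonneg this.1]
  exact this.2

lemma h_intervalIntegrable {a b : ℝ} (ha : a ∈ Icc 0 (π/2)) (hb : b ∈ Icc 0 (π/2)) :
    IntervalIntegrable (h d) volume a b :=
  ((h_integrableOn hd).mono_set (uIcc_subset_Icc ha hb)).intervalIntegrable

lemma gci_continuousOn : ContinuousOn (gci d) (Icc 0 (π/2)) := by
  have h1 : IntervalIntegrable (h d) volume 0 (π/2) :=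
    h_intervalIntegrable hd (left_mem_Icc.2 (by positivity)) (right_mem_Icc.2 (by positivity))
  have := (intervalIntegral.continuousOn_primitive_interval'
    h1 left_mem_uIcc).neg
  rw [uIcc_of_le (by positivity)] at this
  exact this.congr fun θ _ => (gci_eq d θ)

lemma gci_neg {θ : ℝ} (hθ : θ ∈ Ioc 0 (π/2)) : gci d θ < 0 := by
  rw [gci_eq, neg_lt, neg_zero]
  refine intervalIntegral.intervalIntegral_pos_of_pos_on
    (h_intervalIntegrable hd (left_mem_Icc.2 (by positivity)) ⟨hθ.1.le, hθ.2⟩) ?_ hθ.1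
  intro β hβ
  exact h_pos hd ⟨hβ.1.le, lt_of_lt_of_le hβ.2 hθ.2⟩

lemma abs_gci_le {θ : ℝ} (hθ : θ ∈ Icc 0 (π/2)) : |gci d θ| ≤ π/2 := by
  rw [gci_eq, abs_neg, ← Real.norm_eq_abs]
  calc ‖∫ β in (0:ℝ)..θ, h d β‖ ≤ 1 * |θ - 0| := by
        refine intervalIntegral.norm_integral_le_of_norm_le_const fun β hβ => ?_
        rw [uIoc_of_le hθ.1] at hβ
        have := h_mem hd ⟨hβ.1.le, le_trans hβ.2 hθ.2⟩
        rw [Real.norm_eq_abs, abs_of_nonneg this.1]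
        exact this.2
    _ ≤ π/2 := by rw [one_mul, sub_zero, abs_of_nonneg hθ.1]; exact hθ.2

lemma exp_le_linear {t : ℝ} (ht : 0 < t) : exp (-1 / (d * t)) ≤ d * t := by
  have hx : 0 < 1 / (d * t) := by positivity
  have h1 : 1 / (d * t) ≤ exp (1 / (d * t)) := by
    linarith [Real.add_one_le_exp (1 / (d * t))]
  rw [neg_div, Real.exp_neg, ← one_div]
  calc 1 / exp (1 / (d * t)) ≤ 1 / (1 / (d * t)) := one_div_le_one_div_of_le hx h1
    _ = d * t := one_div_one_div _

lemma exp_le_quadratic {t : ℝ} (ht : 0 < t) : exp (-1 / (d * t)) ≤ 4 * d^2 * t^2 := by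
  set x := 1 / (d * t) with hxdef
  have hx : 0 < x := by positivity
  have h1 : x/2 + 1 ≤ exp (x/2) := Real.add_one_le_exp _
  have h2 : (x/2)^2 ≤ exp (x/2)^2 := pow_le_pow_left₀ (by positivity) (by linarith) 2
  have h3 : exp (x/2)^2 = exp x := by rw [sq, ← Real.exp_add]; congr 1; ring
  have h4 : x^2/4 ≤ exp x := by nlinarith
  have h5 : 0 < x^2/4 := by positivity
  rw [neg_div, Real.exp_neg, ← one_div]
  calc 1 / exp x ≤ 1 / (x^2/4) := one_div_le_one_div_of_le h5 h4
    _ = 4 * d^2 * t^2 := by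
        rw [hxdef]
        field_simp

lemma w2_bound {θ : ℝ} (hθ : θ ∈ Ioc 0 (π/2)) :
    ‖sin θ / cos θ^2 * exp (-1 / (d * cos θ))‖ ≤ 4 * d^2 := by
  have hs0 : 0 ≤ sin θ := sin_nonneg_of_nonneg_of_le_pi hθ.1.le (by linarith [hθ.2, pi_pos])
  have hs1 : sin θ ≤ 1 := sin_le_one θ
  have hc0 : 0 ≤ cos θ := cos_nonneg_of_mem_Icc ⟨by linarith [hθ.1.le, pi_pos], hθ.2⟩
  rcases eq_or_lt_of_le hc0 with heq | hc
  · rw [← heq]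
    norm_num
    positivity
  · rw [Real.norm_eq_abs, abs_of_nonneg (by positivity)]
    calc sin θ / cos θ^2 * exp (-1 / (d * cos θ)) ≤ 1 / cos θ^2 * (4 * d^2 * cos θ^2) := by
          gcongr
          exact exp_le_quadratic hd hc
      _ = 4 * d^2 := by field_simp

lemma w1_bound {θ : ℝ} (hθ : θ ∈ Ioc 0 (π/2)) :
    ‖sin θ / cos θ * exp (-1 / (d * cos θ))‖ ≤ d := by
  have hs0 : 0 ≤ sin θ := sin_nonneg_of_nonneg_of_le_pi hθ.1.le (by linarith [hθ.2, pi_pos])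
  have hs1 : sin θ ≤ 1 := sin_le_one θ
  have hc0 : 0 ≤ cos θ := cos_nonneg_of_mem_Icc ⟨by linarith [hθ.1.le, pi_pos], hθ.2⟩
  rcases eq_or_lt_of_le hc0 with heq | hc
  · rw [← heq]
    norm_num
    positivity
  · rw [Real.norm_eq_abs, abs_of_nonneg (by positivity)]
    calc sin θ / cos θ * exp (-1 / (d * cos θ)) ≤ 1 / cos θ * (d * cos θ) := by
          gcongr
          exact exp_le_linear hd hc
      _ = d := by field_simp

lemma w0_bound {θ : ℝ} (hθ : θ ∈ Ioc 0 (π/2)) :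
    ‖sin θ * exp (-1 / (d * cos θ))‖ ≤ 1 := by
  have hc0 : 0 ≤ cos θ := cos_nonneg_of_mem_Icc ⟨by linarith [hθ.1.le, pi_pos], hθ.2⟩
  rw [Real.norm_eq_abs, abs_mul, abs_of_pos (exp_pos _)]
  calc |sin θ| * exp (-1 / (d * cos θ)) ≤ 1 * 1 :=
        mul_le_mul (abs_sin_le_one _) (exp_le_one hd hc0) (exp_pos _).le one_pos.le
    _ = 1 := by ring

lemma main_aux {w : ℝ → ℝ} (hw : Measurable w) {M : ℝ}
    (hM : ∀ θ ∈ Ioc (0:ℝ) (π/2), ‖w θ‖ ≤ M)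
    (hwpos : ∀ θ ∈ Ioo (0:ℝ) (π/2), 0 < w θ) :
    IntervalIntegrable (fun θ => gci d θ * w θ) volume 0 (π/2) ∧
      (∫ θ in (0:ℝ)..(π/2), gci d θ * w θ) < 0 := by
  have hpi : (0:ℝ) < π/2 := by positivity
  have hsub : Ioc (0:ℝ) (π/2) ⊆ Icc 0 (π/2) := Ioc_subset_Icc_self
  have hasm : AEStronglyMeasurable (fun θ => gci d θ * w θ)
      (volume.restrict (Ioc (0:ℝ) (π/2))) := by
    have h1 : AEStronglyMeasurable (gci d) (volume.restrict (Ioc (0:ℝ) (π/2))) :=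
      ((gci_continuousOn hd).mono hsub).aestronglyMeasurable measurableSet_Ioc
    exact h1.mul hw.aestronglyMeasurable.restrict
  have hint : IntervalIntegrable (fun θ => gci d θ * w θ) volume 0 (π/2) := by
    rw [intervalIntegrable_iff_integrableOn_Ioc_of_le hpi.le]
    refine ⟨hasm, HasFiniteIntegral.restrict_of_bounded (C := (π/2) * M) measure_Ioc_lt_top ?_⟩
    refine (ae_restrict_iff' measurableSet_Ioc).2 (Filter.Eventually.of_forall fun θ hθ => ?_)
    rw [norm_mul]
    have h1 : ‖gci d θ‖ ≤ π/2 := by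
      rw [Real.norm_eq_abs]; exact abs_gci_le hd (hsub hθ)
    exact mul_le_mul h1 (hM θ hθ) (norm_nonneg _) (by positivity)
  refine ⟨hint, ?_⟩
  have hneg : 0 < ∫ θ in (0:ℝ)..(π/2), -(gci d θ * w θ) := by
    refine intervalIntegral.intervalIntegral_pos_of_pos_on hint.neg (fun θ hθ => ?_) hpi
    have h1 := gci_neg hd (Ioo_subset_Ioc_self hθ)
    have h2 := hwpos θ hθ
    nlinarith
  rw [intervalIntegral.integral_neg] at hneg
  linarith

end GciAux

/-- The three weighted integrals of the GCI function `g` appearing in the hydrodynamic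
coefficients are finite (the integrands are interval-integrable) and strictly negative. -/
theorem gci_weighted_integrals_neg (d : ℝ) (hd : 0 < d) :
    (IntervalIntegrable
        (fun θ => gci d θ * (sin θ / cos θ ^ 2) * exp (-1 / (d * cos θ))) volume 0 (π/2) ∧
      (∫ θ in (0:ℝ)..(π/2), gci d θ * (sin θ / cos θ ^ 2) * exp (-1 / (d * cos θ))) < 0) ∧
    (IntervalIntegrable
        (fun θ => gci d θ * (sin θ / cos θ) * exp (-1 / (d * cos θ))) volume 0 (π/2) ∧
      (∫ θ in (0:ℝ)..(π/2), gci d θ * (sin θ / cos θ) * exp (-1 / (d * cos θ))) < 0) ∧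
    (IntervalIntegrable
        (fun θ => gci d θ * sin θ * exp (-1 / (d * cos θ))) volume 0 (π/2) ∧
      (∫ θ in (0:ℝ)..(π/2), gci d θ * sin θ * exp (-1 / (d * cos θ))) < 0) := by
  have hexpm : Measurable (fun θ : ℝ => exp (-1 / (d * cos θ))) :=
    Real.measurable_exp.comp (measurable_const.div (measurable_cos.const_mul d))
  have hwpos : ∀ θ ∈ Ioo (0:ℝ) (π/2), 0 < sin θ ∧ 0 < cos θ := by
    intro θ hθ
    exact ⟨Real.sin_pos_of_pos_of_lt_pi hθ.1 (by linarith [hθ.2, pi_pos]),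
      Real.cos_pos_of_mem_Ioo ⟨by linarith [hθ.1, pi_pos], hθ.2⟩⟩
  refine ⟨?_, ?_, ?_⟩
  · have := GciAux.main_aux hd (w := fun θ => sin θ / cos θ ^ 2 * exp (-1 / (d * cos θ)))
      ((measurable_sin.div (measurable_cos.pow measurable_const)).mul hexpm)
      (fun θ hθ => GciAux.w2_bound hd hθ)
      (fun θ hθ => by
        obtain ⟨hs, hc⟩ := hwpos θ hθ
        positivity)
    simpa only [← mul_assoc] using this
  · have := GciAux.main_aux hd (w := fun θ => sin θ / cos θ * exp (-1 / (d * cos θ)))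
      ((measurable_sin.div measurable_cos).mul hexpm)
      (fun θ hθ => GciAux.w1_bound hd hθ)
      (fun θ hθ => by
        obtain ⟨hs, hc⟩ := hwpos θ hθ
        positivity)
    simpa only [← mul_assoc] using this
  · have := GciAux.main_aux hd (w := fun θ => sin θ * exp (-1 / (d * cos θ)))
      (measurable_sin.mul hexpm)
      (fun θ hθ => GciAux.w0_bound hd hθ)
      (fun θ hθ => by
        obtain ⟨hs, hc⟩ := hwpos θ hθ
        positivity)
    simpa only [← mul_assoc] using this
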